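/- Let f: ℂ → M_n(ℂ) be holomorphic with f(λ) invertible for every λ ∈ ℂ, let α ∈ ℂ, and let N be an n×n complex matrix with N² = 0. Write the power series expansion of f at α as f(λ) = ∑_{i≥0} f_i(λ−α)^i. Assume Nf₂ + f₀ is invertible, set X = (Nf₃ + f₁)(Nf₂ + f₀)^{−1}, assume Nf₂ + f₀ − XNf₁ is invertible, and define M₁ = (Nf₂ + f₀ − XNf₁)^{−1}(XNf₀ − Nf₁) and M₂ = −(Nf₂ + f₀)^{−1}(Nf₁M₁ + Nf₀). Then the function λ ↦ (Id + (λ−α)^{−2}N) · f(λ) · (Id + (λ−α)^{−1}M₁ + (λ−α)^{−2}M₂), defined on ℂ ∖ {α}, extends holomorphically across α. -/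

import Mathlib

set_option synthInstance.maxHeartbeats 1000000
set_option maxHeartbeats 1000000

open scoped Matrix

/-- The `k`-th Taylor coefficient at `α` of a matrix-valued function, taken entrywise:
`f_k = f^{(k)}(α) / k!`. -/
noncomputable def taylorCoeff {n : ℕ} (f : ℂ → Matrix (Fin n) (Fin n) ℂ) (α : ℂ) (k : ℕ) :
    Matrix (Fin n) (Fin n) ℂ :=
  Matrix.of fun i j => iteratedDeriv k (fun l => f l i j) α / (k.factorial : ℂ)

open Function FormalMultilinearSeries in
private lemma dslope_iter_diff (u : ℂ → ℂ) (hu : Differentiable ℂ u) (α : ℂ) :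
    ∀ k, Differentiable ℂ ((swap dslope α)^[k] u) := by
  intro k
  induction k with
  | zero => simpa using hu
  | succ k ih =>
    rw [Function.iterate_succ_apply']
    intro b
    rcases eq_or_ne b α with rfl | hb
    · exact ((ih.hasFPowerSeriesOnBall b one_pos).hasFPowerSeriesAt.has_fpower_series_dslope_fslope).differentiableAt
    · exact (differentiableAt_dslope_of_ne hb).mpr (ih b)

open Function FormalMultilinearSeries in
private lemma dslope_iter_value (u : ℂ → ℂ) (hu : Differentiable ℂ u) (α : ℂ) (k : ℕ) :
    (swap dslope α)^[k] u α = iteratedDeriv k u α / (k.factorial : ℂ) := by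
  have hball := hu.hasFPowerSeriesOnBall α (R := 1) one_pos
  have hp := hball.hasFPowerSeriesAt
  have h0 : (fslope^[k] (cauchyPowerSeries u α 1)).coeff 0 = (swap dslope α)^[k] u α :=
    (hp.has_fpower_series_iterate_dslope_fslope k).coeff_zero 1
  rw [← h0, coeff_iterate_fslope, zero_add]
  have h3 := hball.factorial_smul (y := (1 : ℂ)) k
  have h4 : (k.factorial : ℂ) * (cauchyPowerSeries u α 1).coeff k = iteratedDeriv k u α := by
    rw [iteratedDeriv_eq_iteratedFDeriv, ← h3, nsmul_eq_mul]
    rfl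
  rw [← h4]
  rw [mul_div_cancel_left₀ _ (Nat.cast_ne_zero.mpr k.factorial_ne_zero)]

open Function in
private lemma expand4 (u : ℂ → ℂ) (hu : Differentiable ℂ u) (α l : ℂ) :
    u l = iteratedDeriv 0 u α / ((0 : ℕ).factorial : ℂ)
      + (l - α) * (iteratedDeriv 1 u α / ((1 : ℕ).factorial : ℂ))
      + (l - α) ^ 2 * (iteratedDeriv 2 u α / ((2 : ℕ).factorial : ℂ))
      + (l - α) ^ 3 * (iteratedDeriv 3 u α / ((3 : ℕ).factorial : ℂ))
      + (l - α) ^ 4 * ((swap dslope α)^[4] u l) := by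
  have h0 : ∀ k, (swap dslope α)^[k] u l
      = iteratedDeriv k u α / (k.factorial : ℂ) + (l - α) * ((swap dslope α)^[k + 1] u l) := by
    intro k
    have h := sub_smul_dslope ((swap dslope α)^[k] u) α l
    rw [smul_eq_mul] at h
    rw [Function.iterate_succ_apply', ← dslope_iter_value u hu α k]
    rw [show swap dslope α ((swap dslope α)^[k] u) = dslope ((swap dslope α)^[k] u) α from rfl]
    linear_combination -h
  have e0 : u l = iteratedDeriv 0 u α / ((0 : ℕ).factorial : ℂ)
      + (l - α) * ((swap dslope α)^[0 + 1] u l) := by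
    rw [← h0 0, Function.iterate_zero_apply]
  have e1 := h0 1
  have e2 := h0 2
  have e3 := h0 3
  rw [show (0:ℕ)+1 = 1 from rfl] at e0
  rw [show (1:ℕ)+1 = 2 from rfl] at e1
  rw [show (2:ℕ)+1 = 3 from rfl] at e2
  rw [show (3:ℕ)+1 = 4 from rfl] at e3
  rw [e0, e1, e2, e3]
  ring

private lemma poly_id {A : Type*} [Ring A] [Algebra ℂ A] (q : ℂ)
    (N f₀ f₁ f₂ f₃ M₁ M₂ T : A) (hN : N * N = 0)
    (hc2 : N*f₂*M₂ + N*f₁*M₁ + N*f₀ + f₀*M₂ = 0)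
    (hc3 : N*f₃*M₂ + N*f₂*M₁ + N*f₁ + f₁*M₂ + f₀*M₁ = 0) :
    (q^2•(1:A) + N) * ((f₀ + q•f₁ + q^2•f₂ + q^3•f₃ + q^4•T) * (q^2•1 + q•M₁ + M₂))
      = q^4 • (N*f₂ + N*f₃*M₁ + f₀ + f₁*M₁ + f₂*M₂
          + q•(N*f₃ + f₁ + f₂*M₁ + f₃*M₂) + q^2•(f₂ + f₃*M₁) + q^3•f₃
          + (N + q^2•1) * (T * (M₂ + q•M₁ + q^2•1))) := by
  have hN' : ∀ x : A, N * (N * x) = 0 := fun x => by rw [← mul_assoc, hN, zero_mul]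
  have h02 : f₀ * M₂ = -(N*f₂*M₂ + N*f₁*M₁ + N*f₀) := eq_neg_of_add_eq_zero_right hc2
  have h01 : f₀ * M₁ = -(N*f₃*M₂ + N*f₂*M₁ + N*f₁ + f₁*M₂) := eq_neg_of_add_eq_zero_right hc3
  simp only [mul_add, add_mul, smul_mul_assoc, mul_smul_comm, smul_add, smul_smul, mul_one,
    one_mul, mul_assoc, h02, h01, neg_add, mul_neg, smul_neg, hN', smul_zero, add_zero, zero_add,
    neg_neg]
  match_scalars <;> ring

private lemma diff_matrix_mul {n : ℕ} {A B : ℂ → Matrix (Fin n) (Fin n) ℂ}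
    (hA : ∀ i j, Differentiable ℂ fun l => A l i j)
    (hB : ∀ i j, Differentiable ℂ fun l => B l i j) :
    ∀ i j, Differentiable ℂ fun l => (A l * B l) i j := by
  intro i j
  simp only [Matrix.mul_apply]
  exact Differentiable.fun_sum fun k _ => (hA i k).mul (hB k j)

/-- **Nilpotent dressing with a pole of order two (Proposition 6.1).**
Let `f : ℂ → M_n(ℂ)` be holomorphic (entrywise) with invertible values, `α ∈ ℂ`, and `N`
with `N² = 0`.  With `f_i` the Taylor coefficients of `f` at `α`, assume `N f₂ + f₀`
is invertible, set `X = (N f₃ + f₁)(N f₂ + f₀)⁻¹`, assume `N f₂ + f₀ - X N f₁` is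
invertible, and define `M₁ = (N f₂ + f₀ - X N f₁)⁻¹ (X N f₀ - N f₁)` and
`M₂ = -(N f₂ + f₀)⁻¹ (N f₁ M₁ + N f₀)`.  Then
`λ ↦ (Id + (λ-α)⁻² N) f(λ) (Id + (λ-α)⁻¹ M₁ + (λ-α)⁻² M₂)` extends holomorphically
across `α`. -/
theorem nilpotent_dressing_order_two (n : ℕ)
    (f : ℂ → Matrix (Fin n) (Fin n) ℂ)
    (hf : ∀ i j, Differentiable ℂ fun l => f l i j)
    (hfinv : ∀ l : ℂ, IsUnit (f l))
    (α : ℂ) (N : Matrix (Fin n) (Fin n) ℂ) (hN : N * N = 0)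
    (f₀ f₁ f₂ f₃ : Matrix (Fin n) (Fin n) ℂ)
    (hf₀ : f₀ = taylorCoeff f α 0) (hf₁ : f₁ = taylorCoeff f α 1)
    (hf₂ : f₂ = taylorCoeff f α 2) (hf₃ : f₃ = taylorCoeff f α 3)
    (hinv0 : IsUnit (N * f₂ + f₀))
    (X : Matrix (Fin n) (Fin n) ℂ) (hX : X = (N * f₃ + f₁) * (N * f₂ + f₀)⁻¹)
    (hinv1 : IsUnit (N * f₂ + f₀ - X * N * f₁))
    (M₁ M₂ : Matrix (Fin n) (Fin n) ℂ)
    (hM₁ : M₁ = (N * f₂ + f₀ - X * N * f₁)⁻¹ * (X * N * f₀ - N * f₁))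
    (hM₂ : M₂ = -(N * f₂ + f₀)⁻¹ * (N * f₁ * M₁ + N * f₀)) :
    ∃ h : ℂ → Matrix (Fin n) (Fin n) ℂ,
      (∀ i j, Differentiable ℂ fun l => h l i j) ∧
      ∀ l : ℂ, l ≠ α →
        h l = (1 + (((l - α) ^ 2)⁻¹) • N) * f l *
          (1 + (l - α)⁻¹ • M₁ + (((l - α) ^ 2)⁻¹) • M₂) := by
  classical
  -- the holomorphic remainder term
  set Rm : ℂ → Matrix (Fin n) (Fin n) ℂ :=
    fun l => Matrix.of fun i j => (Function.swap dslope α)^[4] (fun t => f t i j) l with hRm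
  have hRdiff : ∀ i j, Differentiable ℂ fun l => Rm l i j := by
    intro i j
    exact dslope_iter_diff (fun t => f t i j) (hf i j) α 4
  -- Taylor expansion of f with remainder
  have hfA : ∀ l, f l = f₀ + (l - α) • f₁ + (l - α) ^ 2 • f₂ + (l - α) ^ 3 • f₃
      + (l - α) ^ 4 • Rm l := by
    intro l
    ext i j
    simp only [Matrix.add_apply, Matrix.smul_apply, smul_eq_mul, hf₀, hf₁, hf₂, hf₃,
      taylorCoeff, Matrix.of_apply, hRm]
    exact expand4 (fun t => f t i j) (hf i j) α l
  -- algebraic identities from the hypotheses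
  have hdet0 : IsUnit (N * f₂ + f₀).det := (Matrix.isUnit_iff_isUnit_det _).mp hinv0
  have hdet1 : IsUnit (N * f₂ + f₀ - X * N * f₁).det := (Matrix.isUnit_iff_isUnit_det _).mp hinv1
  have hA : (N * f₂ + f₀) * (N * f₂ + f₀)⁻¹ = 1 := Matrix.mul_nonsing_inv _ hdet0
  have hA' : (N * f₂ + f₀)⁻¹ * (N * f₂ + f₀) = 1 := Matrix.nonsing_inv_mul _ hdet0
  have hAM₂ : (N * f₂ + f₀) * M₂ = -(N * f₁ * M₁ + N * f₀) := by
    calc (N * f₂ + f₀) * M₂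
        = -((N * f₂ + f₀) * (N * f₂ + f₀)⁻¹ * (N * f₁ * M₁ + N * f₀)) := by
          rw [hM₂]; noncomm_ring
      _ = -(N * f₁ * M₁ + N * f₀) := by rw [hA, one_mul]
  have hBM₁ : (N * f₂ + f₀ - X * N * f₁) * M₁ = X * N * f₀ - N * f₁ := by
    rw [hM₁, ← mul_assoc, Matrix.mul_nonsing_inv _ hdet1, one_mul]
  have hXA : X * (N * f₂ + f₀) = N * f₃ + f₁ := by
    rw [hX, mul_assoc, hA', mul_one]
  have hc2 : N*f₂*M₂ + N*f₁*M₁ + N*f₀ + f₀*M₂ = 0 := by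
    calc N*f₂*M₂ + N*f₁*M₁ + N*f₀ + f₀*M₂
        = (N * f₂ + f₀) * M₂ + (N * f₁ * M₁ + N * f₀) := by noncomm_ring
      _ = -(N * f₁ * M₁ + N * f₀) + (N * f₁ * M₁ + N * f₀) := by rw [hAM₂]
      _ = 0 := by abel
  have hc3 : N*f₃*M₂ + N*f₂*M₁ + N*f₁ + f₁*M₂ + f₀*M₁ = 0 := by
    have h1 : (N * f₃ + f₁) * M₂ = -(X * (N * f₁ * M₁ + N * f₀)) := by
      rw [← hXA, mul_assoc, hAM₂, mul_neg]
    have h2 : (N * f₂ + f₀) * M₁ = (X * N * f₀ - N * f₁) + X * N * f₁ * M₁ := by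
      have h := hBM₁
      rw [sub_mul] at h
      exact sub_eq_iff_eq_add.mp h
    calc N*f₃*M₂ + N*f₂*M₁ + N*f₁ + f₁*M₂ + f₀*M₁
        = (N * f₃ + f₁) * M₂ + ((N * f₂ + f₀) * M₁ + N * f₁) := by noncomm_ring
      _ = -(X * (N * f₁ * M₁ + N * f₀)) + (((X * N * f₀ - N * f₁) + X * N * f₁ * M₁) + N * f₁) := by
          rw [h1, h2]
      _ = 0 := by noncomm_ring
  refine ⟨fun l => N*f₂ + N*f₃*M₁ + f₀ + f₁*M₁ + f₂*M₂
      + (l - α)•(N*f₃ + f₁ + f₂*M₁ + f₃*M₂) + (l - α)^2•(f₂ + f₃*M₁) + (l - α)^3•f₃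
      + (N + (l - α)^2•1) * (Rm l * (M₂ + (l - α)•M₁ + (l - α)^2•1)), ?_, ?_⟩
  · -- differentiability, entrywise
    intro i j
    have hb : Differentiable ℂ fun l : ℂ => l - α := differentiable_id.sub (differentiable_const α)
    have hL : ∀ i j, Differentiable ℂ fun l : ℂ =>
        (N + (l - α)^2•(1 : Matrix (Fin n) (Fin n) ℂ)) i j := by
      intro i j
      simp only [Matrix.add_apply, Matrix.smul_apply, smul_eq_mul]
      exact (differentiable_const _).add ((hb.pow 2).mul (differentiable_const _))
    have hRt : ∀ i j, Differentiable ℂ fun l : ℂ =>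
        (M₂ + (l - α)•M₁ + (l - α)^2•(1 : Matrix (Fin n) (Fin n) ℂ)) i j := by
      intro i j
      simp only [Matrix.add_apply, Matrix.smul_apply, smul_eq_mul]
      exact ((differentiable_const _).add (hb.mul (differentiable_const _))).add
        ((hb.pow 2).mul (differentiable_const _))
    have hprod := diff_matrix_mul hL (diff_matrix_mul hRdiff hRt)
    simp only [Matrix.add_apply, Matrix.smul_apply, smul_eq_mul]
    exact ((((((((differentiable_const _).add (differentiable_const _)).add
      (differentiable_const _)).add (differentiable_const _)).add
      (differentiable_const _)).add (hb.mul (differentiable_const _))).add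
      ((hb.pow 2).mul (differentiable_const _))).add
      ((hb.pow 3).mul (differentiable_const _))).add (hprod i j)
  · -- identity away from α
    intro l hl
    have hq : l - α ≠ 0 := sub_ne_zero.mpr hl
    have hq2 : (l - α) ^ 2 ≠ 0 := pow_ne_zero 2 hq
    have e1 : (1 : Matrix (Fin n) (Fin n) ℂ) + ((l - α)^2)⁻¹ • N
        = ((l - α)^2)⁻¹ • ((l - α)^2 • 1 + N) := by
      rw [smul_add, smul_smul, inv_mul_cancel₀ hq2, one_smul]
    have e2 : (1 : Matrix (Fin n) (Fin n) ℂ) + (l - α)⁻¹ • M₁ + ((l - α)^2)⁻¹ • M₂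
        = ((l - α)^2)⁻¹ • ((l - α)^2 • 1 + (l - α) • M₁ + M₂) := by
      rw [smul_add, smul_add, smul_smul, smul_smul, inv_mul_cancel₀ hq2, one_smul]
      congr 2
      rw [pow_two, mul_inv_rev, mul_assoc, inv_mul_cancel₀ hq, mul_one]
    have key : (1 + ((l - α)^2)⁻¹ • N) * f l * (1 + (l - α)⁻¹ • M₁ + ((l - α)^2)⁻¹ • M₂)
        = N*f₂ + N*f₃*M₁ + f₀ + f₁*M₁ + f₂*M₂
          + (l - α)•(N*f₃ + f₁ + f₂*M₁ + f₃*M₂) + (l - α)^2•(f₂ + f₃*M₁) + (l - α)^3•f₃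
          + (N + (l - α)^2•1) * (Rm l * (M₂ + (l - α)•M₁ + (l - α)^2•1)) := by
      rw [e1, e2, smul_mul_assoc, smul_mul_assoc, mul_smul_comm, smul_smul, mul_assoc, hfA l,
        poly_id (l - α) N f₀ f₁ f₂ f₃ M₁ M₂ (Rm l) hN hc2 hc3, smul_smul,
        show ((l - α)^2)⁻¹ * ((l - α)^2)⁻¹ * (l - α)^4 = 1 by
          field_simp, one_smul]
    exact key.symm
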